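/- If a finite group G admits an abelian partition, then ϑ_a(G) ≥ ⌈|G| / c(G)⌉, where c(G) is the number of conjugacy classes of G. -/

import Mathlib

/-- An abelian partition of a group `G`: a family of `n` pairwise disjoint sets covering `G`,
each of size at least 2 and consisting of pairwise commuting elements. -/
def IsAbelianPartition {G : Type*} [Group G] {n : ℕ} (A : Fin n → Set G) : Prop :=
  (∀ i, 2 ≤ (A i).ncard) ∧ (⋃ i, A i) = Set.univ ∧
    Pairwise (Function.onFun Disjoint A) ∧
    ∀ i, ∀ x ∈ A i, ∀ y ∈ A i, x * y = y * x

/-- The minimal number of parts in an abelian partition of `G` (0 if none exists). -/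
noncomputable def apDegree (G : Type*) [Group G] : ℕ :=
  sInf {n | ∃ A : Fin n → Set G, IsAbelianPartition A}

/-- The maximal size of a noncommuting subset of `G`. -/
noncomputable def maxNoncommuting (G : Type*) [Group G] : ℕ :=
  sSup {k | ∃ S : Set G, S.ncard = k ∧ ∀ x ∈ S, ∀ y ∈ S, x ≠ y → x * y ≠ y * x}

theorem apDegree_ge_card_div_conjClasses
    {G : Type*} [Group G] [Finite G]
    (hap : ∃ (n : ℕ) (A : Fin n → Set G), IsAbelianPartition A) :
    ⌈(Nat.card G : ℚ) / (Nat.card (ConjClasses G) : ℚ)⌉ ≤ (apDegree G : ℤ) := by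
  classical
  cases nonempty_fintype G
  have hne : {n | ∃ A : Fin n → Set G, IsAbelianPartition A}.Nonempty := by
    obtain ⟨n, A, hA⟩ := hap; exact ⟨n, A, hA⟩
  set m := apDegree G with hm
  obtain ⟨A, h2, hcov, hdisj, hcomm⟩ :
      ∃ A : Fin m → Set G, IsAbelianPartition A := Nat.sInf_mem hne
  -- sum of sizes equals |G|
  have hsum : ∑ i, (A i).ncard = Nat.card G := by
    have e1 : Nat.card G = Nat.card (⋃ i, A i) := by
      rw [hcov]; exact Nat.card_congr (Equiv.Set.univ G).symm
    have e2 : Nat.card (⋃ i, A i) = Nat.card (Σ i, A i) :=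
      Nat.card_congr (Set.unionEqSigmaOfDisjoint hdisj)
    rw [e1, e2]
    simp [Nat.card_eq_fintype_card, Fintype.card_sigma, Set.ncard_eq_toFinset_card',
      Set.toFinset_card]
  -- sum of squares bounded by commuting pairs
  have hinj : ∑ i, (A i).ncard ^ 2 ≤ Nat.card (ConjClasses G) * Nat.card G := by
    rw [← card_comm_eq_card_conjClasses_mul_card]
    have key : Nat.card (Σ i, (A i × A i)) ≤ Nat.card { p : G × G // Commute p.1 p.2 } := by
      apply Nat.card_le_card_of_injective
        (f := fun x : Σ i, (A i × A i) =>
          (⟨(x.2.1.1, x.2.2.1), hcomm x.1 _ x.2.1.2 _ x.2.2.2⟩ :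
            { p : G × G // Commute p.1 p.2 }))
      rintro ⟨i, ⟨x, hx⟩, ⟨y, hy⟩⟩ ⟨j, ⟨x', hx'⟩, ⟨y', hy'⟩⟩ h
      simp only [Subtype.mk_eq_mk, Prod.mk.injEq] at h
      obtain ⟨hxx, hyy⟩ := h
      have : i = j := by
        by_contra hij
        exact Set.disjoint_left.mp (hdisj hij) hx hx'
      subst this
      rfl
    calc ∑ i, (A i).ncard ^ 2 = Nat.card (Σ i, (A i × A i)) := by
          simp [Nat.card_eq_fintype_card, Fintype.card_sigma, sq,
            Set.ncard_eq_toFinset_card', Set.toFinset_card]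
      _ ≤ _ := key
  -- Cauchy-Schwarz
  have hcs : (Nat.card G : ℤ) ^ 2 ≤ (m : ℤ) * (Nat.card (ConjClasses G) * Nat.card G) := by
    have := sq_sum_le_card_mul_sum_sq (s := (Finset.univ : Finset (Fin m)))
      (f := fun i => ((A i).ncard : ℤ))
    calc (Nat.card G : ℤ) ^ 2 = (∑ i, ((A i).ncard : ℤ)) ^ 2 := by
          rw [← Nat.cast_sum, hsum]
      _ ≤ (Finset.univ.card : ℤ) * ∑ i, ((A i).ncard : ℤ) ^ 2 := by
          exact_mod_cast this
      _ ≤ (m : ℤ) * (Nat.card (ConjClasses G) * Nat.card G) := by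
          rw [Finset.card_univ, Fintype.card_fin]
          apply mul_le_mul_of_nonneg_left _ (by positivity)
          calc (∑ i, ((A i).ncard : ℤ) ^ 2) = ((∑ i, (A i).ncard ^ 2 : ℕ) : ℤ) := by
                push_cast; ring
            _ ≤ _ := by exact_mod_cast hinj
  have hGpos : 0 < Nat.card G := Nat.card_pos
  have hcpos : 0 < Nat.card (ConjClasses G) := Nat.card_pos
  have hkey : (Nat.card G : ℤ) ≤ (m : ℤ) * Nat.card (ConjClasses G) := by
    have := hcs
    rw [sq] at this
    nlinarith [hGpos, hcpos]
  rw [Int.ceil_le]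
  rw [div_le_iff₀ (by exact_mod_cast hcpos)]
  push_cast
  exact_mod_cast hkey
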